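/- Suppose X = [0,1]^N (so the bottom boundary of X is negligible for μ). Then for any optimal feasible price schedule p and every q ∈ 𝒬 with q ≠ 0, the demand set D(q) satisfies μ(D(q)) = 0. -/

import Mathlib

open MeasureTheory Set

noncomputable section

namespace Stmt9

variable {N : ℕ}

/-- Dot product on `ℝ^N`. -/
def dot (x q : Fin N → ℝ) : ℝ := ∑ n, x n * q n

/-- The box `[a,b]^N`. -/
def box (a b : ℝ) : Set (Fin N → ℝ) := Icc (fun _ => a) (fun _ => b)

/-- `φ(x) = x·∇f(x) + (N+1)·f(x)`. -/
def phi (f : (Fin N → ℝ) → ℝ) (x : Fin N → ℝ) : ℝ :=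
  (∑ n, x n * fderiv ℝ f x (Pi.single n 1)) + (N + 1) * f x

/-- The boundary integral `∫_{[x̲,x̄]^{N−1}} 1_A(ι_n^c(y)) f(ι_n^c(y)) dy`, written as an
integral over the full box divided by the length of the redundant coordinate. -/
def bInt (xl xu : ℝ) (f : (Fin N → ℝ) → ℝ) (n : Fin N) (c : ℝ) (A : Set (Fin N → ℝ)) : ℝ :=
  (xu - xl)⁻¹ *
    ∫ y in box xl xu, A.indicator f (Function.update y n c)

/-- The transformed measure `μ` of the type distribution, as a set function:
`μ(A) = Σₙ (x̄·∫ 1_A(ι_n^{x̄}) f − x̲·∫ 1_A(ι_n^{x̲}) f) − ∫_{A} φ`. -/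
def mu (xl xu : ℝ) (f : (Fin N → ℝ) → ℝ) (A : Set (Fin N → ℝ)) : ℝ :=
  (∑ n, (xu * bInt xl xu f n xu A - xl * bInt xl xu f n xl A)) -
    ∫ x in A ∩ box xl xu, phi f x

/-- The indirect utility `u_p(x) = sup_{q ∈ Q} (x·q − p(q))`. -/
def indirect (Q : Set (Fin N → ℝ)) (p : (Fin N → ℝ) → ℝ) (x : Fin N → ℝ) : ℝ :=
  sSup ((fun q => dot x q - p q) '' Q)

/-- The lower convex envelope `p̄(q) = sup_{x ∈ X} (x·q − u_p(x))`. -/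
def envelope (X Q : Set (Fin N → ℝ)) (p : (Fin N → ℝ) → ℝ) (q : Fin N → ℝ) : ℝ :=
  sSup ((fun x => dot x q - indirect Q p x) '' X)

/-- The demand set of a bundle `q`. -/
def demandSet (X Q : Set (Fin N → ℝ)) (p : (Fin N → ℝ) → ℝ) (q : Fin N → ℝ) :
    Set (Fin N → ℝ) :=
  {x ∈ X | ∀ q' ∈ Q, dot x q' - envelope X Q p q' ≤ dot x q - envelope X Q p q}

/-- A feasible price schedule: bounded below, with the zero bundle priced at zero. -/
def Feasible (Q : Set (Fin N → ℝ)) (p : (Fin N → ℝ) → ℝ) : Prop :=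
  BddBelow (p '' Q) ∧ p 0 = 0

/-- The seller's revenue `∫_X u_p dμ`. -/
def TR (xl xu : ℝ) (f : (Fin N → ℝ) → ℝ) (Q : Set (Fin N → ℝ))
    (p : (Fin N → ℝ) → ℝ) : ℝ :=
  (∑ n, (xu - xl)⁻¹ *
    (xu * ∫ y in box xl xu,
            indirect Q p (Function.update y n xu) * f (Function.update y n xu)
     - xl * ∫ y in box xl xu,
            indirect Q p (Function.update y n xl) * f (Function.update y n xl)))
  - ∫ x in box xl xu, indirect Q p x * phi f x

/-- A price schedule is optimal if it is feasible and maximizes `∫_X u_p dμ` among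
feasible price schedules. -/
def Optimal (xl xu : ℝ) (f : (Fin N → ℝ) → ℝ) (Q : Set (Fin N → ℝ))
    (p : (Fin N → ℝ) → ℝ) : Prop :=
  Feasible Q p ∧ ∀ p', Feasible Q p' → TR xl xu f Q p' ≤ TR xl xu f Q p

/-- The maintained assumptions on the type density `f` on `X = [x̲,x̄]^N`. -/
def DensityHyp (xl xu : ℝ) (f : (Fin N → ℝ) → ℝ) : Prop :=
  (∀ x, 0 ≤ f x) ∧ (∫ x in box xl xu, f x = 1) ∧
  ContinuousOn f (box xl xu) ∧ ContDiffOn ℝ 1 f (interior (box xl xu)) ∧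
  (∀ x ∈ frontier (box xl xu), 0 < f x) ∧
  (∃ M : ℝ, ∀ x ∈ interior (box xl xu), |phi f x| ≤ M)

/-- The maintained assumptions on the allocation space `𝒬`. -/
def QHyp (Q : Set (Fin N → ℝ)) : Prop :=
  Convex ℝ Q ∧ IsCompact Q ∧ (∀ q ∈ Q, ∀ n, 0 ≤ q n) ∧
  (interior Q).Nonempty ∧ (0 : Fin N → ℝ) ∈ Q

/-- The measure with density `f` (the buyers' type distribution). -/
def muF (f : (Fin N → ℝ) → ℝ) : Measure (Fin N → ℝ) :=
  volume.withDensity fun x => ENNReal.ofReal (f x)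

end Stmt9

namespace Stmt9

variable {N : ℕ}

open Filter Topology Function

/-! ### Auxiliary infrastructure -/

open Filter Topology Function

lemma mem_box_iff {x : Fin N → ℝ} : x ∈ box (0:ℝ) 1 ↔ (∀ n, 0 ≤ x n) ∧ (∀ n, x n ≤ 1) := by
  simp [box, Set.mem_Icc, Pi.le_def]

lemma zero_mem_box : (0 : Fin N → ℝ) ∈ box (0:ℝ) 1 :=
  mem_box_iff.2 ⟨fun _ => le_rfl, fun _ => zero_le_one⟩

lemma update_mem_box {y : Fin N → ℝ} (hy : y ∈ box (0:ℝ) 1) (n : Fin N) :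
    Function.update y n (1:ℝ) ∈ box (0:ℝ) 1 := by
  rcases mem_box_iff.1 hy with ⟨h0, h1⟩
  refine mem_box_iff.2 ⟨fun m => ?_, fun m => ?_⟩ <;> rcases eq_or_ne m n with h | h <;>
    simp [Function.update_apply, h, h0 m, h1 m, zero_le_one]

lemma isCompact_box : IsCompact (box (0:ℝ) 1 : Set (Fin N → ℝ)) := isCompact_Icc

lemma isClosed_box : IsClosed (box (0:ℝ) 1 : Set (Fin N → ℝ)) := isClosed_Icc

lemma measurableSet_box : MeasurableSet (box (0:ℝ) 1 : Set (Fin N → ℝ)) := measurableSet_Icc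

instance box_finiteMeasure : IsFiniteMeasure (volume.restrict (box (0:ℝ) 1 : Set (Fin N → ℝ))) :=
  ⟨by rw [Measure.restrict_apply_univ]; exact isCompact_box.measure_lt_top⟩

lemma continuous_update_one (n : Fin N) :
    Continuous fun y : Fin N → ℝ => Function.update y n (1:ℝ) :=
  continuous_id.update n continuous_const

lemma ae_mem_interior_box :
    ∀ᵐ y ∂(volume.restrict (box (0:ℝ) 1 : Set (Fin N → ℝ))), y ∈ interior (box (0:ℝ) 1) := by
  have hpi : (Set.pi univ fun _ : Fin N => Ioo (0:ℝ) 1) ⊆ interior (box (0:ℝ) 1) := by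
    apply interior_maximal
    · intro x hx
      rw [Set.mem_pi] at hx
      exact mem_box_iff.2 ⟨fun n => (hx n trivial).1.le, fun n => (hx n trivial).2.le⟩
    · exact isOpen_set_pi finite_univ fun a _ => isOpen_Ioo
  have hIoo_sub : (Set.pi univ fun _ : Fin N => Ioo (0:ℝ) 1) ⊆ (box (0:ℝ) 1 : Set (Fin N → ℝ)) :=
    hpi.trans interior_subset
  have hbox_eq : (box (0:ℝ) 1 : Set (Fin N → ℝ)) = Set.pi univ fun _ : Fin N => Icc (0:ℝ) 1 :=
    (pi_univ_Icc _ _).symm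
  have hIcc : volume (box (0:ℝ) 1 : Set (Fin N → ℝ)) = 1 := by
    rw [hbox_eq, volume_pi_pi]
    simp [Real.volume_Icc]
  have hIoo : volume (Set.pi univ fun _ : Fin N => Ioo (0:ℝ) 1) = 1 := by
    rw [volume_pi_pi]; simp [Real.volume_Ioo]
  have hdiff : volume ((box (0:ℝ) 1 : Set (Fin N → ℝ)) \ Set.pi univ fun _ => Ioo (0:ℝ) 1) = 0 := by
    rw [measure_diff hIoo_sub
      ((MeasurableSet.univ_pi fun _ => measurableSet_Ioo).nullMeasurableSet)
      (by rw [hIoo]; exact ENNReal.one_ne_top), hIcc, hIoo, tsub_self]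
  have hnull : volume ((box (0:ℝ) 1 : Set (Fin N → ℝ)) \ interior (box (0:ℝ) 1)) = 0 :=
    measure_mono_null (diff_subset_diff_right hpi) hdiff
  rw [ae_restrict_iff' measurableSet_box]
  have := (measure_eq_zero_iff_ae_notMem).1 hnull
  filter_upwards [this] with y hy hybox
  by_contra hint
  exact hy ⟨hybox, hint⟩

lemma continuous_dot_right (x : Fin N → ℝ) : Continuous fun q' : Fin N → ℝ => dot x q' :=
  continuous_finset_sum _ fun n _ => continuous_const.mul (continuous_apply n)

lemma continuous_dot_left (q' : Fin N → ℝ) : Continuous fun x : Fin N → ℝ => dot x q' :=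
  continuous_finset_sum _ fun n _ => (continuous_apply n).mul continuous_const

lemma dot_zero_right (x : Fin N → ℝ) : dot x 0 = 0 := by simp [dot]

lemma dot_sub_le (x y q' : Fin N → ℝ) : dot x q' - dot y q' ≤ (∑ n, |q' n|) * dist x y := by
  have h : dot x q' - dot y q' = ∑ n, (x n - y n) * q' n := by
    rw [dot, dot, ← Finset.sum_sub_distrib]
    exact Finset.sum_congr rfl fun n _ => by ring
  rw [h]
  calc ∑ n, (x n - y n) * q' n ≤ ∑ n, |(x n - y n) * q' n| :=
        Finset.sum_le_sum fun n _ => le_abs_self _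
    _ = ∑ n, |x n - y n| * |q' n| := by simp [abs_mul]
    _ ≤ ∑ n, dist x y * |q' n| := by
        refine Finset.sum_le_sum fun n _ => ?_
        have h1 : |x n - y n| ≤ dist x y := by
          rw [← Real.dist_eq]; exact dist_le_pi_dist x y n
        exact mul_le_mul_of_nonneg_right h1 (abs_nonneg _)
    _ = (∑ n, |q' n|) * dist x y := by
        rw [Finset.sum_mul]
        exact Finset.sum_congr rfl fun n _ => by ring

lemma exists_R {Q : Set (Fin N → ℝ)} (hQc : IsCompact Q) :
    ∃ R : ℝ, 0 ≤ R ∧ ∀ q' ∈ Q, (∑ n, |q' n|) ≤ R := by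
  obtain ⟨C, hC⟩ := hQc.exists_bound_of_continuousOn
    ((continuous_finset_sum _ fun n _ => (continuous_apply n).abs).continuousOn
      (s := Q))
  refine ⟨max C 0, le_max_right _ _, fun q' hq' => ?_⟩
  have := hC q' hq'
  rw [Real.norm_eq_abs] at this
  exact (le_abs_self _).trans (this.trans (le_max_left _ _))

/-! ### Indirect utility facts -/

section Indirect

variable {Q : Set (Fin N → ℝ)} {p : (Fin N → ℝ) → ℝ}

lemma indirect_img_nonempty (hQ0 : (0 : Fin N → ℝ) ∈ Q) (x : Fin N → ℝ) :
    ((fun q' => dot x q' - p q') '' Q).Nonempty := ⟨_, ⟨0, hQ0, rfl⟩⟩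

lemma indirect_bddAbove (hQc : IsCompact Q) (hp : BddBelow (p '' Q)) (x : Fin N → ℝ) :
    BddAbove ((fun q' => dot x q' - p q') '' Q) := by
  obtain ⟨C, hC⟩ := hQc.exists_bound_of_continuousOn (continuous_dot_right x).continuousOn
  obtain ⟨c, hc⟩ := hp
  refine ⟨C - c, ?_⟩
  rintro _ ⟨q', hq', rfl⟩
  have h1 := hC q' hq'
  rw [Real.norm_eq_abs] at h1
  have h2 : c ≤ p q' := hc ⟨q', hq', rfl⟩
  have h3 : dot x q' ≤ C := (le_abs_self _).trans h1
  simp only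
  linarith

lemma le_indirect (hQc : IsCompact Q) (hp : BddBelow (p '' Q)) {q' : Fin N → ℝ}
    (hq' : q' ∈ Q) (x : Fin N → ℝ) : dot x q' - p q' ≤ indirect Q p x :=
  le_csSup (indirect_bddAbove hQc hp x) ⟨q', hq', rfl⟩

lemma indirect_le (hQ0 : (0 : Fin N → ℝ) ∈ Q) {x : Fin N → ℝ} {a : ℝ}
    (h : ∀ q' ∈ Q, dot x q' - p q' ≤ a) : indirect Q p x ≤ a :=
  csSup_le (indirect_img_nonempty hQ0 x) (by rintro _ ⟨q', hq', rfl⟩; exact h q' hq')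

lemma indirect_nonneg (hQc : IsCompact Q) (hQ0 : (0 : Fin N → ℝ) ∈ Q)
    (hp : BddBelow (p '' Q)) (hp0 : p 0 = 0) (x : Fin N → ℝ) : 0 ≤ indirect Q p x := by
  have := le_indirect hQc hp hQ0 x
  rw [dot_zero_right, hp0] at this
  simpa using this

lemma indirect_lipschitz (hQc : IsCompact Q) (hQ0 : (0 : Fin N → ℝ) ∈ Q)
    (hp : BddBelow (p '' Q)) {R : ℝ} (hR0 : 0 ≤ R)
    (hR : ∀ q' ∈ Q, (∑ n, |q' n|) ≤ R) :
    LipschitzWith (Real.toNNReal R) (indirect Q p) := by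
  have key : ∀ x y : Fin N → ℝ, indirect Q p x ≤ indirect Q p y + R * dist x y := by
    intro x y
    refine indirect_le hQ0 fun q' hq' => ?_
    have h1 := le_indirect hQc hp hq' y
    have h2 := dot_sub_le x y q'
    have h3 : (∑ n, |q' n|) * dist x y ≤ R * dist x y :=
      mul_le_mul_of_nonneg_right (hR q' hq') dist_nonneg
    linarith
  rw [lipschitzWith_iff_dist_le_mul]
  intro x y
  rw [Real.coe_toNNReal _ hR0, Real.dist_eq, abs_sub_le_iff]
  constructor
  · have := key x y; linarith
  · have := key y x; rw [dist_comm] at this; linarith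

lemma indirect_continuous (hQc : IsCompact Q) (hQ0 : (0 : Fin N → ℝ) ∈ Q)
    (hp : BddBelow (p '' Q)) : Continuous (indirect Q p) := by
  obtain ⟨R, hR0, hR⟩ := exists_R hQc
  exact (indirect_lipschitz hQc hQ0 hp hR0 hR).continuous

end Indirect

/-! ### Envelope facts -/

section Envelope

variable {Q : Set (Fin N → ℝ)} {p : (Fin N → ℝ) → ℝ}

lemma envelope_img_nonempty (q' : Fin N → ℝ) :
    ((fun x => dot x q' - indirect Q p x) '' (box (0:ℝ) 1)).Nonempty :=
  ⟨_, ⟨0, zero_mem_box, rfl⟩⟩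

lemma envelope_bddAbove (hu : Continuous (indirect Q p)) (q' : Fin N → ℝ) :
    BddAbove ((fun x => dot x q' - indirect Q p x) '' (box (0:ℝ) 1)) := by
  obtain ⟨C, hC⟩ := isCompact_box.exists_bound_of_continuousOn
    (((continuous_dot_left q').sub hu).continuousOn)
  refine ⟨C, ?_⟩
  rintro _ ⟨x, hx, rfl⟩
  have := hC x hx
  rw [Real.norm_eq_abs] at this
  exact (le_abs_self _).trans this

lemma le_envelope (hu : Continuous (indirect Q p)) {x : Fin N → ℝ}
    (hx : x ∈ box (0:ℝ) 1) (q' : Fin N → ℝ) :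
    dot x q' - indirect Q p x ≤ envelope (box (0:ℝ) 1) Q p q' :=
  le_csSup (envelope_bddAbove hu q') ⟨x, hx, rfl⟩

lemma envelope_le {q' : Fin N → ℝ} {a : ℝ}
    (h : ∀ x ∈ box (0:ℝ) 1, dot x q' - indirect Q p x ≤ a) :
    envelope (box (0:ℝ) 1) Q p q' ≤ a :=
  csSup_le (envelope_img_nonempty q') (by rintro _ ⟨x, hx, rfl⟩; exact h x hx)

lemma envelope_le_p (hQc : IsCompact Q) (hp : BddBelow (p '' Q)) {q' : Fin N → ℝ}
    (hq' : q' ∈ Q) : envelope (box (0:ℝ) 1) Q p q' ≤ p q' := by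
  refine envelope_le fun x _ => ?_
  have := le_indirect hQc hp hq' x
  linarith

/-- `ℓ_{q'}(x) ≤ u(x)` for `x ∈ X`. -/
lemma ell_le_u (hu : Continuous (indirect Q p)) {x : Fin N → ℝ}
    (hx : x ∈ box (0:ℝ) 1) (q' : Fin N → ℝ) :
    dot x q' - envelope (box (0:ℝ) 1) Q p q' ≤ indirect Q p x := by
  have := le_envelope hu hx q'
  linarith

/-- `u(x) = sup_{q'} ℓ_{q'}(x)` on `X` (the `≤` half, which is what we use). -/
lemma u_le_of_ell_le (hQc : IsCompact Q) (hQ0 : (0 : Fin N → ℝ) ∈ Q)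
    (hp : BddBelow (p '' Q)) {x : Fin N → ℝ} {a : ℝ}
    (h : ∀ q' ∈ Q, dot x q' - envelope (box (0:ℝ) 1) Q p q' ≤ a) :
    indirect Q p x ≤ a := by
  refine indirect_le hQ0 fun q' hq' => ?_
  have h1 := envelope_le_p hQc hp hq'
  have h2 := h q' hq'
  linarith

lemma envelope_zero_nonpos (hQc : IsCompact Q) (hQ0 : (0 : Fin N → ℝ) ∈ Q)
    (hp : BddBelow (p '' Q)) (hp0 : p 0 = 0) :
    envelope (box (0:ℝ) 1) Q p 0 ≤ 0 := by
  refine envelope_le fun x _ => ?_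
  rw [dot_zero_right]
  have := indirect_nonneg hQc hQ0 hp hp0 x
  linarith

lemma envelope_lip_oneside (hu : Continuous (indirect Q p)) (q1 q2 : Fin N → ℝ) :
    envelope (box (0:ℝ) 1) Q p q1 ≤ envelope (box (0:ℝ) 1) Q p q2 + (N : ℝ) * dist q1 q2 := by
  refine envelope_le fun x hx => ?_
  have h1 := le_envelope hu hx q2
  have h2 : dot x q1 - dot x q2 ≤ (N : ℝ) * dist q1 q2 := by
    have h : dot x q1 - dot x q2 = ∑ n, x n * (q1 n - q2 n) := by
      rw [dot, dot, ← Finset.sum_sub_distrib]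
      exact Finset.sum_congr rfl fun n _ => by ring
    rw [h]
    calc ∑ n, x n * (q1 n - q2 n) ≤ ∑ n, |x n * (q1 n - q2 n)| :=
          Finset.sum_le_sum fun n _ => le_abs_self _
      _ = ∑ n, |x n| * |q1 n - q2 n| := by simp [abs_mul]
      _ ≤ ∑ n : Fin N, dist q1 q2 := by
          refine Finset.sum_le_sum fun n _ => ?_
          have hxn : |x n| ≤ 1 := by
            rcases mem_box_iff.1 hx with ⟨ha, hb⟩
            rw [abs_le]; constructor <;> [linarith [ha n]; exact hb n]
          have hd : |q1 n - q2 n| ≤ dist q1 q2 := by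
            rw [← Real.dist_eq]; exact dist_le_pi_dist q1 q2 n
          calc |x n| * |q1 n - q2 n| ≤ 1 * |q1 n - q2 n| :=
                mul_le_mul_of_nonneg_right hxn (abs_nonneg _)
            _ = |q1 n - q2 n| := one_mul _
            _ ≤ dist q1 q2 := hd
      _ = (N : ℝ) * dist q1 q2 := by
          rw [Finset.sum_const, Finset.card_univ, Fintype.card_fin, nsmul_eq_mul]
  linarith

lemma envelope_continuous (hu : Continuous (indirect Q p)) :
    Continuous (envelope (box (0:ℝ) 1) Q p) := by
  have : LipschitzWith (Real.toNNReal (N : ℝ)) (envelope (box (0:ℝ) 1) Q p) := by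
    rw [lipschitzWith_iff_dist_le_mul]
    intro x y
    rw [Real.coe_toNNReal _ (Nat.cast_nonneg N), Real.dist_eq, abs_sub_le_iff]
    constructor
    · have := envelope_lip_oneside hu x y; linarith
    · have := envelope_lip_oneside hu y x; rw [dist_comm] at this; linarith
  exact this.continuous

end Envelope

/-! ### Demand sets -/

section Demand

variable {Q : Set (Fin N → ℝ)} {p : (Fin N → ℝ) → ℝ}

/-- The set of maximizers ("demand") at a point `x`. -/
def Dem (Q : Set (Fin N → ℝ)) (p : (Fin N → ℝ) → ℝ) (x : Fin N → ℝ) : Set (Fin N → ℝ) :=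
  {q' ∈ Q | indirect Q p x ≤ dot x q' - envelope (box (0:ℝ) 1) Q p q'}

lemma Dem_subset_Q (x : Fin N → ℝ) : Dem Q p x ⊆ Q := fun _ h => h.1

lemma Dem_nonempty (hQc : IsCompact Q) (hQ0 : (0 : Fin N → ℝ) ∈ Q)
    (hp : BddBelow (p '' Q)) (hu : Continuous (indirect Q p)) (x : Fin N → ℝ) :
    (Dem Q p x).Nonempty := by
  obtain ⟨qs, hqs, hmax⟩ := hQc.exists_isMaxOn ⟨0, hQ0⟩
    (((continuous_dot_right x).sub (envelope_continuous hu)).continuousOn)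
  refine ⟨qs, hqs, ?_⟩
  refine indirect_le hQ0 fun q' hq' => ?_
  have h1 := envelope_le_p hQc hp hq'
  have h2 : dot x q' - envelope (box 0 1) Q p q' ≤ dot x qs - envelope (box 0 1) Q p qs :=
    hmax hq'
  linarith

lemma Dem_compact (hQc : IsCompact Q) (hu : Continuous (indirect Q p)) (x : Fin N → ℝ) :
    IsCompact (Dem Q p x) := by
  have : Dem Q p x = Q ∩ {q' | indirect Q p x ≤ dot x q' - envelope (box (0:ℝ) 1) Q p q'} := rfl
  rw [this]
  exact hQc.inter_right (isClosed_le continuous_const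
    ((continuous_dot_right x).sub (envelope_continuous hu)))

lemma Dem_eq_u (hu : Continuous (indirect Q p)) {x : Fin N → ℝ} (hx : x ∈ box (0:ℝ) 1)
    {q' : Fin N → ℝ} (hq' : q' ∈ Dem Q p x) :
    dot x q' - envelope (box (0:ℝ) 1) Q p q' = indirect Q p x :=
  le_antisymm (ell_le_u hu hx q') hq'.2

lemma zero_mem_Dem (hQc : IsCompact Q) (hQ0 : (0 : Fin N → ℝ) ∈ Q)
    (hp : BddBelow (p '' Q)) (hp0 : p 0 = 0) {x : Fin N → ℝ}
    (hux : indirect Q p x = 0) : (0 : Fin N → ℝ) ∈ Dem Q p x := by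
  refine ⟨hQ0, ?_⟩
  rw [hux, dot_zero_right]
  have := envelope_zero_nonpos hQc hQ0 hp hp0
  linarith

lemma mem_demandSet_iff (hQc : IsCompact Q) (hQ0 : (0 : Fin N → ℝ) ∈ Q)
    (hp : BddBelow (p '' Q)) (hu : Continuous (indirect Q p))
    {q : Fin N → ℝ} (hq : q ∈ Q) (x : Fin N → ℝ) :
    x ∈ demandSet (box (0:ℝ) 1) Q p q ↔ x ∈ box (0:ℝ) 1 ∧ q ∈ Dem Q p x := by
  constructor
  · rintro ⟨hx, h⟩
    refine ⟨hx, hq, ?_⟩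
    exact u_le_of_ell_le hQc hQ0 hp h
  · rintro ⟨hx, hqd⟩
    refine ⟨hx, fun q' hq' => ?_⟩
    exact (ell_le_u hu hx q').trans hqd.2

lemma demandSet_closed (hu : Continuous (indirect Q p)) (q : Fin N → ℝ) :
    IsClosed (demandSet (box (0:ℝ) 1) Q p q) := by
  have : demandSet (box (0:ℝ) 1) Q p q =
      (box (0:ℝ) 1) ∩ ⋂ q' ∈ Q, {x | dot x q' - envelope (box (0:ℝ) 1) Q p q'
        ≤ dot x q - envelope (box (0:ℝ) 1) Q p q} := by
    ext x
    simp only [demandSet, Set.mem_sep_iff, Set.mem_inter_iff, Set.mem_iInter, Set.mem_setOf_eq]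
  rw [this]
  exact isClosed_box.inter (isClosed_biInter fun q' _ =>
    isClosed_le ((continuous_dot_left q').sub continuous_const)
      ((continuous_dot_left q).sub continuous_const))

end Demand

/-! ### Differentiability: ties are Lebesgue-null -/

section Diff

variable {Q : Set (Fin N → ℝ)} {p : (Fin N → ℝ) → ℝ}

lemma hasFDerivAt_dot (qi x : Fin N → ℝ) :
    HasFDerivAt (fun y => dot y qi)
      (∑ n, qi n • (ContinuousLinearMap.proj n : (Fin N → ℝ) →L[ℝ] ℝ)) x := by
  have : ∀ n ∈ Finset.univ, HasFDerivAt (fun y : Fin N → ℝ => y n * qi n)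
      (qi n • (ContinuousLinearMap.proj n : (Fin N → ℝ) →L[ℝ] ℝ)) x := by
    intro n _
    exact ((ContinuousLinearMap.proj n :
      (Fin N → ℝ) →L[ℝ] ℝ).hasFDerivAt (x := x)).mul_const (qi n)
  exact HasFDerivAt.fun_sum this

lemma Dem_unique_of_diff (hu : Continuous (indirect Q p))
    {x : Fin N → ℝ} (hx : x ∈ interior (box (0:ℝ) 1))
    (hdiff : DifferentiableAt ℝ (indirect Q p) x)
    {q₁ q₂ : Fin N → ℝ} (h1 : q₁ ∈ Dem Q p x) (h2 : q₂ ∈ Dem Q p x) : q₁ = q₂ := by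
  have hxb : x ∈ box (0:ℝ) 1 := interior_subset hx
  have key : ∀ qi : Fin N → ℝ, qi ∈ Dem Q p x →
      fderiv ℝ (indirect Q p) x
        = ∑ n, qi n • (ContinuousLinearMap.proj n : (Fin N → ℝ) →L[ℝ] ℝ) := by
    intro qi hqi
    set L := ∑ n, qi n • (ContinuousLinearMap.proj n : (Fin N → ℝ) →L[ℝ] ℝ) with hL
    have hmin : IsLocalMin (fun y => indirect Q p y - dot y qi) x := by
      have hnhds : box (0:ℝ) 1 ∈ nhds x := mem_interior_iff_mem_nhds.1 hx
      refine Filter.eventually_of_mem hnhds fun y hy => ?_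
      have hy1 : dot y qi - envelope (box (0:ℝ) 1) Q p qi ≤ indirect Q p y :=
        ell_le_u hu hy qi
      have hx1 : dot x qi - envelope (box (0:ℝ) 1) Q p qi = indirect Q p x :=
        Dem_eq_u hu hxb hqi
      simp only
      linarith
    have hdsub : DifferentiableAt ℝ (fun y => indirect Q p y - dot y qi) x :=
      hdiff.sub (hasFDerivAt_dot qi x).differentiableAt
    have h0 := hmin.fderiv_eq_zero
    have hder : HasFDerivAt (fun y => indirect Q p y - dot y qi)
        (fderiv ℝ (indirect Q p) x - L) x :=
      hdiff.hasFDerivAt.sub (hasFDerivAt_dot qi x)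
    have := hder.fderiv
    rw [h0] at this
    have := sub_eq_zero.1 this.symm
    exact this
  have hk1 := key q₁ h1
  have hk2 := key q₂ h2
  rw [hk1] at hk2
  funext m
  have := congrArg (fun (L : (Fin N → ℝ) →L[ℝ] ℝ) => L (Pi.single m 1)) hk2
  simp only [ContinuousLinearMap.sum_apply, ContinuousLinearMap.smul_apply,
    ContinuousLinearMap.proj_apply] at this
  have hsum : ∀ qi : Fin N → ℝ,
      (∑ n, qi n • (Pi.single m (1:ℝ) n)) = qi m := by
    intro qi
    rw [Finset.sum_eq_single m]
    · simp
    · intro b _ hb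
      simp [Pi.single_apply, hb]
    · intro h; exact absurd (Finset.mem_univ m) h
  rw [hsum q₁, hsum q₂] at this
  exact this

/-- On a.e. point of the box (w.r.t. Lebesgue), the demand set is a singleton if nonempty:
formulated as what we need downstream. -/
lemma ae_dem_subsingleton (hQc : IsCompact Q) (hQ0 : (0 : Fin N → ℝ) ∈ Q)
    (hp : BddBelow (p '' Q)) :
    ∀ᵐ x ∂(volume.restrict (box (0:ℝ) 1 : Set (Fin N → ℝ))),
      ∀ q₁ ∈ Dem Q p x, ∀ q₂ ∈ Dem Q p x, q₁ = q₂ := by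
  have hu : Continuous (indirect Q p) := indirect_continuous hQc hQ0 hp
  obtain ⟨R, hR0, hR⟩ := exists_R hQc
  have hlip := indirect_lipschitz hQc hQ0 hp hR0 hR
  have hdiff : ∀ᵐ x ∂(volume : Measure (Fin N → ℝ)), DifferentiableAt ℝ (indirect Q p) x :=
    hlip.ae_differentiableAt
  have hdiff' : ∀ᵐ x ∂(volume.restrict (box (0:ℝ) 1 : Set (Fin N → ℝ))),
      DifferentiableAt ℝ (indirect Q p) x :=
    ae_restrict_of_ae hdiff
  filter_upwards [hdiff', ae_mem_interior_box] with x hd hint q₁ h1 q₂ h2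
  exact Dem_unique_of_diff hu hint hd h1 h2

end Diff

/-! ### Integration infrastructure -/

section Integration

variable {f : (Fin N → ℝ) → ℝ}

/-- The bilinear pairing `∫ w dμ` written out with explicit integrals. -/
def Jint (f w : (Fin N → ℝ) → ℝ) : ℝ :=
  (∑ n, ∫ y in box (0:ℝ) 1, w (Function.update y n 1) * f (Function.update y n 1)) -
    ∫ y in box (0:ℝ) 1, w y * phi f y

lemma f_aesm (hf : DensityHyp 0 1 f) :
    AEStronglyMeasurable f (volume.restrict (box (0:ℝ) 1 : Set (Fin N → ℝ))) :=
  hf.2.2.1.aestronglyMeasurable measurableSet_box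

lemma f_upd_contOn (hf : DensityHyp 0 1 f) (n : Fin N) :
    ContinuousOn (fun y => f (Function.update y n (1:ℝ))) (box (0:ℝ) 1) :=
  hf.2.2.1.comp (continuous_update_one n).continuousOn fun y hy => update_mem_box hy n

lemma f_upd_integrable (hf : DensityHyp 0 1 f) (n : Fin N) :
    IntegrableOn (fun y => f (Function.update y n (1:ℝ))) (box (0:ℝ) 1) volume :=
  (f_upd_contOn hf n).integrableOn_compact isCompact_box

lemma phi_aesm (hf : DensityHyp 0 1 f) :
    AEStronglyMeasurable (phi f) (volume.restrict (box (0:ℝ) 1 : Set (Fin N → ℝ))) := by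
  have h1 : Measurable fun x : Fin N → ℝ => ∑ n, x n * fderiv ℝ f x (Pi.single n 1) :=
    Finset.measurable_sum _ fun n _ =>
      (measurable_pi_apply n).mul (measurable_fderiv_apply_const ℝ f _)
  exact h1.aestronglyMeasurable.add ((f_aesm hf).const_mul _)

lemma phi_bound_ae (hf : DensityHyp 0 1 f) :
    ∃ M : ℝ, ∀ᵐ y ∂(volume.restrict (box (0:ℝ) 1 : Set (Fin N → ℝ))), |phi f y| ≤ M := by
  obtain ⟨M, hM⟩ := hf.2.2.2.2.2
  exact ⟨M, by filter_upwards [ae_mem_interior_box] with y hy using hM y hy⟩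

lemma phi_integrable (hf : DensityHyp 0 1 f) :
    Integrable (phi f) (volume.restrict (box (0:ℝ) 1 : Set (Fin N → ℝ))) := by
  obtain ⟨M, hM⟩ := phi_bound_ae hf
  exact Integrable.mono' (integrable_const M) (phi_aesm hf)
    (by filter_upwards [hM] with y hy; rwa [Real.norm_eq_abs])

lemma w_phi_integrable (hf : DensityHyp 0 1 f) {w : (Fin N → ℝ) → ℝ} (hw : Continuous w) :
    Integrable (fun y => w y * phi f y)
      (volume.restrict (box (0:ℝ) 1 : Set (Fin N → ℝ))) := by
  obtain ⟨C, hC⟩ := isCompact_box.exists_bound_of_continuousOn hw.continuousOn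
  refine Integrable.mono' ((phi_integrable hf).abs.const_mul C)
    (hw.aestronglyMeasurable.mul (phi_aesm hf)) ?_
  filter_upwards [self_mem_ae_restrict measurableSet_box] with y hy
  rw [Real.norm_eq_abs, abs_mul]
  exact mul_le_mul_of_nonneg_right ((Real.norm_eq_abs _ ▸ hC y hy)) (abs_nonneg _)

lemma w_face_integrable (hf : DensityHyp 0 1 f) {w : (Fin N → ℝ) → ℝ} (hw : Continuous w)
    (n : Fin N) :
    IntegrableOn (fun y => w (Function.update y n 1) * f (Function.update y n 1))
      (box (0:ℝ) 1) volume :=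
  (((hw.comp (continuous_update_one n)).continuousOn).mul
    (f_upd_contOn hf n)).integrableOn_compact isCompact_box

lemma TR_eq (Q : Set (Fin N → ℝ)) (p' : (Fin N → ℝ) → ℝ) :
    TR 0 1 f Q p' = (∑ n, ∫ y in box (0:ℝ) 1,
        indirect Q p' (Function.update y n 1) * f (Function.update y n 1)) -
      ∫ y in box (0:ℝ) 1, indirect Q p' y * phi f y := by
  unfold TR
  norm_num

lemma TR_sub_eq (hf : DensityHyp 0 1 f) (Q : Set (Fin N → ℝ)) (p₁ p₂ : (Fin N → ℝ) → ℝ)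
    (hc1 : Continuous (indirect Q p₁)) (hc2 : Continuous (indirect Q p₂)) :
    TR 0 1 f Q p₁ - TR 0 1 f Q p₂ = Jint f (fun y => indirect Q p₁ y - indirect Q p₂ y) := by
  rw [TR_eq, TR_eq]
  unfold Jint
  have hface : ∀ n : Fin N,
      (∫ y in box (0:ℝ) 1, (indirect Q p₁ (Function.update y n 1) - indirect Q p₂ (Function.update y n 1)) * f (Function.update y n 1))
      = (∫ y in box (0:ℝ) 1, indirect Q p₁ (Function.update y n 1) * f (Function.update y n 1))
        - ∫ y in box (0:ℝ) 1, indirect Q p₂ (Function.update y n 1) * f (Function.update y n 1) := by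
    intro n
    rw [← integral_sub (w_face_integrable hf hc1 n) (w_face_integrable hf hc2 n)]
    congr 1
    funext y
    ring
  have hphi : (∫ y in box (0:ℝ) 1, (indirect Q p₁ y - indirect Q p₂ y) * phi f y)
      = (∫ y in box (0:ℝ) 1, indirect Q p₁ y * phi f y)
        - ∫ y in box (0:ℝ) 1, indirect Q p₂ y * phi f y := by
    rw [← integral_sub (w_phi_integrable hf hc1) (w_phi_integrable hf hc2)]
    congr 1
    funext y
    ring
  rw [Finset.sum_congr rfl fun n _ => hface n, Finset.sum_sub_distrib, hphi]
  ring

lemma Jint_smul (c : ℝ) (w : (Fin N → ℝ) → ℝ) :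
    Jint f (fun y => c * w y) = c * Jint f w := by
  unfold Jint
  have h1 : ∀ n : Fin N,
      (∫ y in box (0:ℝ) 1, (c * w (Function.update y n 1)) * f (Function.update y n 1))
      = c * ∫ y in box (0:ℝ) 1, w (Function.update y n 1) * f (Function.update y n 1) := by
    intro n
    rw [← integral_const_mul]
    congr 1; funext y; ring
  have h2 : (∫ y in box (0:ℝ) 1, (c * w y) * phi f y)
      = c * ∫ y in box (0:ℝ) 1, w y * phi f y := by
    rw [← integral_const_mul]
    congr 1; funext y; ring
  rw [Finset.sum_congr rfl fun n _ => h1 n, h2, ← Finset.mul_sum, mul_sub]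

/-- Dominated convergence for `Jint`. -/
lemma Jint_tendsto (hf : DensityHyp 0 1 f) {G : ℕ → (Fin N → ℝ) → ℝ} {g : (Fin N → ℝ) → ℝ}
    (hGm : ∀ k, AEStronglyMeasurable (G k)
      (volume.restrict (box (0:ℝ) 1 : Set (Fin N → ℝ))))
    (hGmf : ∀ k (n : Fin N), AEStronglyMeasurable (fun y => G k (Function.update y n 1))
      (volume.restrict (box (0:ℝ) 1 : Set (Fin N → ℝ))))
    (hGb : ∀ k, ∀ y ∈ box (0:ℝ) 1, |G k y| ≤ 1)
    (hGlim : ∀ y ∈ box (0:ℝ) 1, Filter.Tendsto (fun k => G k y) Filter.atTop (nhds (g y))) :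
    Filter.Tendsto (fun k => Jint f (G k)) Filter.atTop (nhds (Jint f g)) := by
  unfold Jint
  apply Filter.Tendsto.sub
  · apply tendsto_finset_sum
    intro n _
    apply tendsto_integral_of_dominated_convergence (fun y => f (Function.update y n 1))
    · intro k
      exact (hGmf k n).mul ((f_upd_contOn hf n).aestronglyMeasurable measurableSet_box)
    · exact f_upd_integrable hf n
    · intro k
      filter_upwards [self_mem_ae_restrict measurableSet_box] with y hy
      rw [Real.norm_eq_abs, abs_mul]
      have h1 := hGb k _ (update_mem_box hy n)
      have h2 : |f (Function.update y n 1)| = f (Function.update y n 1) :=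
        abs_of_nonneg (hf.1 _)
      rw [h2]
      calc |G k (Function.update y n 1)| * f (Function.update y n 1)
          ≤ 1 * f (Function.update y n 1) :=
            mul_le_mul_of_nonneg_right h1 (hf.1 _)
        _ = f (Function.update y n 1) := one_mul _
    · filter_upwards [self_mem_ae_restrict measurableSet_box] with y hy
      exact (hGlim _ (update_mem_box hy n)).mul_const _
  · obtain ⟨M, hM⟩ := phi_bound_ae hf
    apply tendsto_integral_of_dominated_convergence (fun _ => M)
    · intro k
      exact (hGm k).mul (phi_aesm hf)
    · exact integrable_const M
    · intro k
      filter_upwards [self_mem_ae_restrict measurableSet_box, hM] with y hy hMy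
      rw [Real.norm_eq_abs, abs_mul]
      calc |G k y| * |phi f y| ≤ 1 * |phi f y| :=
            mul_le_mul_of_nonneg_right (hGb k y hy) (abs_nonneg _)
        _ = |phi f y| := one_mul _
        _ ≤ M := hMy
    · filter_upwards [self_mem_ae_restrict measurableSet_box] with y hy
      exact (hGlim y hy).mul_const _

lemma mu_eq_Jint (hf : DensityHyp 0 1 f) {A : Set (Fin N → ℝ)} (hA : MeasurableSet A) :
    mu 0 1 f A = Jint f (A.indicator fun _ => (1:ℝ)) := by
  have h1 : ∀ n : Fin N,
      (∫ y in box (0:ℝ) 1, A.indicator (fun _ => (1:ℝ)) (Function.update y n 1)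
        * f (Function.update y n 1))
      = ∫ y in box (0:ℝ) 1, A.indicator f (Function.update y n 1) := by
    intro n
    congr 1
    funext y
    by_cases h : Function.update y n 1 ∈ A <;> simp [Set.indicator_apply, h]
  have h2 : (∫ y in box (0:ℝ) 1, A.indicator (fun _ => (1:ℝ)) y * phi f y)
      = ∫ x in A ∩ box (0:ℝ) 1, phi f x := by
    rw [← Measure.restrict_restrict hA, ← integral_indicator hA]
    congr 1
    funext y
    by_cases h : y ∈ A <;> simp [Set.indicator_apply, h]
  unfold mu bInt Jint
  rw [h2]
  norm_num
  rw [Finset.sum_congr rfl fun n _ => (h1 n).symm]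

end Integration

/-! ### Step A: `μ(D(q)) ≤ 0` -/

section StepA

lemma tk_pos (k : ℕ) : (0:ℝ) < ((k:ℝ)+1)⁻¹ := by positivity

lemma tk_le_one (k : ℕ) : ((k:ℝ)+1)⁻¹ ≤ 1 := by
  rw [inv_le_one_iff₀]
  right
  have : (0:ℝ) ≤ (k:ℝ) := Nat.cast_nonneg k
  linarith

lemma tk_mul (k : ℕ) : ((k:ℝ)+1) * ((k:ℝ)+1)⁻¹ = 1 :=
  mul_inv_cancel₀ (by positivity)

lemma tk_tendsto : Filter.Tendsto (fun k : ℕ => ((k:ℝ)+1)⁻¹) Filter.atTop (nhds 0) := by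
  simpa [one_div] using tendsto_one_div_add_atTop_nhds_zero_nat (𝕜 := ℝ)

lemma tk_eventually_lt {d : ℝ} (hd : 0 < d) :
    ∀ᶠ k : ℕ in Filter.atTop, ((k:ℝ)+1)⁻¹ < d :=
  tk_tendsto (Iio_mem_nhds hd)

lemma stepA {f : (Fin N → ℝ) → ℝ} (hf : DensityHyp 0 1 f) {Q : Set (Fin N → ℝ)}
    (hQ : QHyp Q) {p : (Fin N → ℝ) → ℝ} (hopt : Optimal 0 1 f Q p)
    {q : Fin N → ℝ} (hq : q ∈ Q) (hq0 : q ≠ 0) :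
    mu 0 1 f (demandSet (box (0:ℝ) 1) Q p q) ≤ 0 := by
  obtain ⟨hconv, hQc, hpos, hQint, hQ0⟩ := hQ
  obtain ⟨⟨hp, hp0⟩, hmax⟩ := hopt
  have hu : Continuous (indirect Q p) := indirect_continuous hQc hQ0 hp
  set u := indirect Q p with hu_def
  set pb := envelope (box (0:ℝ) 1) Q p with hpb_def
  set D := demandSet (box (0:ℝ) 1) Q p q with hD_def
  have hne0q : (0 : Fin N → ℝ) ≠ q := fun h => hq0 h.symm
  set pk : ℕ → (Fin N → ℝ) → ℝ := fun k q' => if q' = q then pb q - ((k:ℝ)+1)⁻¹ else p q'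
    with hpk_def
  have hpkq : ∀ k, pk k q = pb q - ((k:ℝ)+1)⁻¹ := fun k => by
    simp only [hpk_def, if_pos rfl]
  have hpkne : ∀ k q', q' ≠ q → pk k q' = p q' := fun k q' h => by
    simp only [hpk_def, if_neg h]
  have hpkfeas : ∀ k, Feasible Q (pk k) := by
    intro k
    constructor
    · obtain ⟨c, hc⟩ := hp
      refine ⟨min c (pb q - 1), ?_⟩
      rintro _ ⟨q', hq', rfl⟩
      by_cases h : q' = q
      · subst h
        rw [hpkq k]
        have h1 := tk_le_one k
        exact le_trans (min_le_right _ _) (by linarith)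
      · rw [hpkne k q' h]
        exact le_trans (min_le_left _ _) (hc ⟨q', hq', rfl⟩)
    · rw [hpkne k 0 hne0q, hp0]
  have hpkb : ∀ k, BddBelow (pk k '' Q) := fun k => (hpkfeas k).1
  have hpble := envelope_le_p hQc hp hq
  have huk : ∀ k x, indirect Q (pk k) x = max (u x) (dot x q - pb q + ((k:ℝ)+1)⁻¹) := by
    intro k x
    apply le_antisymm
    · refine indirect_le hQ0 fun q' hq' => ?_
      by_cases h : q' = q
      · subst h
        rw [hpkq k]
        have : dot x q' - (pb q' - ((k:ℝ)+1)⁻¹) = dot x q' - pb q' + ((k:ℝ)+1)⁻¹ := by ring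
        rw [this]
        exact le_max_right _ _
      · rw [hpkne k q' h]
        exact le_trans (le_indirect hQc hp hq' x) (le_max_left _ _)
    · apply max_le
      · refine indirect_le hQ0 fun q' hq' => ?_
        by_cases h : q' = q
        · subst h
          have helem := le_indirect hQc (hpkb k) hq' x
          rw [hpkq k] at helem
          have h1 := tk_pos k
          linarith
        · have helem := le_indirect hQc (hpkb k) hq' x
          rw [hpkne k q' h] at helem
          exact helem
      · have helem := le_indirect hQc (hpkb k) hq x
        rw [hpkq k] at helem
        linarith
  have hukc : ∀ k, Continuous (indirect Q (pk k)) := fun k =>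
    indirect_continuous hQc hQ0 (hpkb k)
  have hJG : ∀ k : ℕ, Jint f (fun y => ((k:ℝ)+1) * (indirect Q (pk k) y - u y)) ≤ 0 := by
    intro k
    rw [Jint_smul, ← TR_sub_eq hf Q _ _ (hukc k) hu]
    have h2 : TR 0 1 f Q (pk k) ≤ TR 0 1 f Q p := hmax _ (hpkfeas k)
    exact mul_nonpos_of_nonneg_of_nonpos (by positivity) (by linarith)
  have hdiff_bound : ∀ k : ℕ, ∀ y ∈ box (0:ℝ) 1,
      0 ≤ indirect Q (pk k) y - u y ∧ indirect Q (pk k) y - u y ≤ ((k:ℝ)+1)⁻¹ := by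
    intro k y hy
    rw [huk k y]
    have hl : dot y q - pb q ≤ u y := ell_le_u hu hy q
    have h1 := tk_pos k
    constructor
    · have := le_max_left (u y) (dot y q - pb q + ((k:ℝ)+1)⁻¹); linarith
    · have : max (u y) (dot y q - pb q + ((k:ℝ)+1)⁻¹) ≤ u y + ((k:ℝ)+1)⁻¹ :=
        max_le (by linarith) (by linarith)
      linarith
  have hGb : ∀ k : ℕ, ∀ y ∈ box (0:ℝ) 1,
      |(fun y => ((k:ℝ)+1) * (indirect Q (pk k) y - u y)) y| ≤ 1 := by
    intro k y hy
    obtain ⟨hd0, hdt⟩ := hdiff_bound k y hy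
    simp only
    rw [abs_of_nonneg (mul_nonneg (by positivity) hd0)]
    calc ((k:ℝ)+1) * (indirect Q (pk k) y - u y) ≤ ((k:ℝ)+1) * ((k:ℝ)+1)⁻¹ :=
          mul_le_mul_of_nonneg_left hdt (by positivity)
      _ = 1 := tk_mul k
  have hGlim : ∀ y ∈ box (0:ℝ) 1,
      Filter.Tendsto (fun k : ℕ => ((k:ℝ)+1) * (indirect Q (pk k) y - u y)) Filter.atTop
        (nhds (D.indicator (fun _ => (1:ℝ)) y)) := by
    intro y hy
    by_cases hyD : y ∈ D
    · have hDq : q ∈ Dem Q p y :=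
        ((mem_demandSet_iff hQc hQ0 hp hu hq y).1 hyD).2
      have hque : dot y q - pb q = u y := Dem_eq_u hu hy hDq
      have hconst : ∀ k : ℕ, ((k:ℝ)+1) * (indirect Q (pk k) y - u y) = 1 := by
        intro k
        have h1 := tk_pos k
        rw [huk k y, hque, max_eq_right (by linarith)]
        have : u y + ((k:ℝ)+1)⁻¹ - u y = ((k:ℝ)+1)⁻¹ := by ring
        rw [this]
        exact tk_mul k
      rw [Set.indicator_of_mem hyD]
      exact Filter.Tendsto.congr (fun k : ℕ => (hconst k).symm) tendsto_const_nhds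
    · have hlt : dot y q - pb q < u y := by
        have hle := ell_le_u hu hy q
        rcases lt_or_eq_of_le hle with h | h
        · exact h
        · exact absurd ((mem_demandSet_iff hQc hQ0 hp hu hq y).2
            ⟨hy, hq, le_of_eq h.symm⟩) hyD
      have hev : ∀ᶠ k : ℕ in Filter.atTop, ((k:ℝ)+1) * (indirect Q (pk k) y - u y) = 0 := by
        filter_upwards [tk_eventually_lt (show (0:ℝ) < u y - (dot y q - pb q) by linarith)]
          with k hk
        rw [huk k y, max_eq_left (by linarith)]
        ring
      rw [Set.indicator_of_notMem hyD]
      exact Filter.Tendsto.congr' (hev.mono fun k hk => hk.symm) tendsto_const_nhds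
  have hmeasD : MeasurableSet D := (demandSet_closed hu q).measurableSet
  have htt := Jint_tendsto hf
    (G := fun k y => ((k:ℝ)+1) * (indirect Q (pk k) y - u y))
    (g := D.indicator fun _ => (1:ℝ))
    (fun k => (continuous_const.mul ((hukc k).sub hu)).aestronglyMeasurable)
    (fun k n => ((continuous_const.mul ((hukc k).sub hu)).comp
      (continuous_update_one n)).aestronglyMeasurable)
    hGb hGlim
  have hle := le_of_tendsto htt (Filter.Eventually.of_forall hJG)
  rw [mu_eq_Jint hf hmeasD]
  exact hle

end StepA



/-! ### Step B: `0 ≤ μ(D(q))` -/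

section StepB

variable {Q : Set (Fin N → ℝ)} {p : (Fin N → ℝ) → ℝ}

lemma dot_zero_left (q' : Fin N → ℝ) : dot 0 q' = 0 := by simp [dot]

/-- The perturbed price schedule: all prices replaced by the envelope raised by `t_k · c`,
except the zero bundle which stays free. -/
def pert (Q : Set (Fin N → ℝ)) (p : (Fin N → ℝ) → ℝ) (c : (Fin N → ℝ) → ℝ) (k : ℕ) :
    (Fin N → ℝ) → ℝ := fun q' =>
  if q' = 0 then 0 else envelope (box (0:ℝ) 1) Q p q' + ((k:ℝ)+1)⁻¹ * c q'

lemma pert_feasible (hQc : IsCompact Q) (hQ0 : (0 : Fin N → ℝ) ∈ Q) (hp : BddBelow (p '' Q))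
    {c : (Fin N → ℝ) → ℝ} (hcnn : ∀ z, 0 ≤ c z) (k : ℕ) : Feasible Q (pert Q p c k) := by
  have hu : Continuous (indirect Q p) := indirect_continuous hQc hQ0 hp
  constructor
  · refine ⟨min 0 (-(indirect Q p 0)), ?_⟩
    rintro _ ⟨q', hq', rfl⟩
    by_cases h : q' = 0
    · subst h
      rw [pert, if_pos rfl]
      exact min_le_left _ _
    · rw [pert, if_neg h]
      have h1 := le_envelope hu zero_mem_box q'
      rw [dot_zero_left] at h1
      have h2 : 0 ≤ ((k:ℝ)+1)⁻¹ * c q' := mul_nonneg (le_of_lt (tk_pos k)) (hcnn q')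
      exact le_trans (min_le_right _ _) (by linarith)
  · rw [pert, if_pos rfl]

lemma pert_bdd (hQc : IsCompact Q) (hQ0 : (0 : Fin N → ℝ) ∈ Q) (hp : BddBelow (p '' Q))
    {c : (Fin N → ℝ) → ℝ} (hcnn : ∀ z, 0 ≤ c z) (k : ℕ) :
    BddBelow (pert Q p c k '' Q) := (pert_feasible hQc hQ0 hp hcnn k).1

lemma pert_ge (hQc : IsCompact Q) (hQ0 : (0 : Fin N → ℝ) ∈ Q) (hconv : Convex ℝ Q)
    (hp : BddBelow (p '' Q)) {q : Fin N → ℝ} (hq : q ∈ Q) (hq0 : q ≠ 0)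
    {c : (Fin N → ℝ) → ℝ} (hc_cont : Continuous c) (hc0 : c 0 = 0) (hcnn : ∀ z, 0 ≤ c z)
    (k : ℕ) (y : Fin N → ℝ) :
    ∀ q' ∈ Q, dot y q' - envelope (box (0:ℝ) 1) Q p q' - ((k:ℝ)+1)⁻¹ * c q'
      ≤ indirect Q (pert Q p c k) y := by
  have hu : Continuous (indirect Q p) := indirect_continuous hQc hQ0 hp
  have hne : ∀ q'' ∈ Q, q'' ≠ 0 →
      dot y q'' - envelope (box (0:ℝ) 1) Q p q'' - ((k:ℝ)+1)⁻¹ * c q''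
        ≤ indirect Q (pert Q p c k) y := by
    intro q'' hq'' h0
    have := le_indirect hQc (pert_bdd hQc hQ0 hp hcnn k) hq'' y
    rw [pert, if_neg h0] at this
    linarith
  intro q' hq'
  by_cases h : q' = 0
  · subst h
    rw [dot_zero_right, hc0, mul_zero]
    -- approximate `0` by the scaled bundles `(m+1)⁻¹ • q ∈ Q \ {0}`
    have hsmQ : ∀ m : ℕ, (((m:ℝ)+1)⁻¹ • q) ∈ Q := by
      intro m
      have h1 : (0:ℝ) ≤ ((m:ℝ)+1)⁻¹ := le_of_lt (tk_pos m)
      have h2 : (0:ℝ) ≤ 1 - ((m:ℝ)+1)⁻¹ := by linarith [tk_le_one m]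
      have := hconv hq hQ0 h1 h2 (by ring)
      simpa using this
    have hsm0 : ∀ m : ℕ, (((m:ℝ)+1)⁻¹ • q) ≠ 0 :=
      fun m => smul_ne_zero (ne_of_gt (tk_pos m)) hq0
    have helem : ∀ m : ℕ,
        dot y (((m:ℝ)+1)⁻¹ • q) - envelope (box (0:ℝ) 1) Q p (((m:ℝ)+1)⁻¹ • q)
          - ((k:ℝ)+1)⁻¹ * c (((m:ℝ)+1)⁻¹ • q) ≤ indirect Q (pert Q p c k) y :=
      fun m => hne _ (hsmQ m) (hsm0 m)
    have hsm : Filter.Tendsto (fun m : ℕ => ((m:ℝ)+1)⁻¹ • q) Filter.atTop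
        (nhds (0 : Fin N → ℝ)) := by
      have := tk_tendsto.smul_const q
      rwa [zero_smul] at this
    have htend : Filter.Tendsto (fun m : ℕ =>
        dot y (((m:ℝ)+1)⁻¹ • q) - envelope (box (0:ℝ) 1) Q p (((m:ℝ)+1)⁻¹ • q)
          - ((k:ℝ)+1)⁻¹ * c (((m:ℝ)+1)⁻¹ • q)) Filter.atTop
        (nhds (dot y 0 - envelope (box (0:ℝ) 1) Q p 0 - ((k:ℝ)+1)⁻¹ * c 0)) := by
      have t1 := ((continuous_dot_right y).tendsto (0 : Fin N → ℝ)).comp hsm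
      have t2 := ((envelope_continuous hu).tendsto (0 : Fin N → ℝ)).comp hsm
      have t3 := ((hc_cont.tendsto (0 : Fin N → ℝ)).comp hsm).const_mul (((k:ℝ)+1)⁻¹)
      exact (t1.sub t2).sub t3
    have := le_of_tendsto' htend helem
    rw [dot_zero_right, hc0, mul_zero] at this
    linarith
  · exact hne q' hq' h

lemma pert_le_u (hQc : IsCompact Q) (hQ0 : (0 : Fin N → ℝ) ∈ Q) (hp : BddBelow (p '' Q))
    (hp0 : p 0 = 0) {c : (Fin N → ℝ) → ℝ} (hcnn : ∀ z, 0 ≤ c z) (k : ℕ)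
    {y : Fin N → ℝ} (hy : y ∈ box (0:ℝ) 1) :
    indirect Q (pert Q p c k) y ≤ indirect Q p y := by
  have hu : Continuous (indirect Q p) := indirect_continuous hQc hQ0 hp
  refine indirect_le hQ0 fun q' hq' => ?_
  by_cases h : q' = 0
  · subst h
    rw [pert, if_pos rfl, dot_zero_right, sub_zero]
    exact indirect_nonneg hQc hQ0 hp hp0 y
  · rw [pert, if_neg h]
    have h1 := ell_le_u hu hy q'
    have h2 : 0 ≤ ((k:ℝ)+1)⁻¹ * c q' := mul_nonneg (le_of_lt (tk_pos k)) (hcnn q')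
    linarith

lemma u_le_pert (hQc : IsCompact Q) (hQ0 : (0 : Fin N → ℝ) ∈ Q) (hconv : Convex ℝ Q)
    (hp : BddBelow (p '' Q)) {q : Fin N → ℝ} (hq : q ∈ Q) (hq0 : q ≠ 0)
    {c : (Fin N → ℝ) → ℝ} (hc_cont : Continuous c) (hc0 : c 0 = 0) (hcnn : ∀ z, 0 ≤ c z)
    (hc1 : ∀ z, c z ≤ 1) (k : ℕ) {y : Fin N → ℝ} (hy : y ∈ box (0:ℝ) 1) :
    indirect Q p y ≤ indirect Q (pert Q p c k) y + ((k:ℝ)+1)⁻¹ := by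
  refine u_le_of_ell_le hQc hQ0 hp fun q' hq' => ?_
  have h1 := pert_ge hQc hQ0 hconv hp hq hq0 hc_cont hc0 hcnn k y q' hq'
  have h2 : ((k:ℝ)+1)⁻¹ * c q' ≤ ((k:ℝ)+1)⁻¹ :=
    le_trans (mul_le_mul_of_nonneg_left (hc1 q') (le_of_lt (tk_pos k)))
      (le_of_eq (mul_one _))
  linarith

/-- Danskin-type limit: `(k+1)·(u − v_k) → min_{D_x} c`. -/
lemma danskin (hQc : IsCompact Q) (hQ0 : (0 : Fin N → ℝ) ∈ Q) (hconv : Convex ℝ Q)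
    (hp : BddBelow (p '' Q)) (hp0 : p 0 = 0) {q : Fin N → ℝ} (hq : q ∈ Q) (hq0 : q ≠ 0)
    {c : (Fin N → ℝ) → ℝ} (hc_cont : Continuous c) (hc0 : c 0 = 0) (hcnn : ∀ z, 0 ≤ c z)
    (hc1 : ∀ z, c z ≤ 1) {x : Fin N → ℝ} (hx : x ∈ box (0:ℝ) 1) :
    Filter.Tendsto (fun k : ℕ => ((k:ℝ)+1) * (indirect Q p x - indirect Q (pert Q p c k) x))
      Filter.atTop (nhds (sInf (c '' Dem Q p x))) := by
  have hu : Continuous (indirect Q p) := indirect_continuous hQc hQ0 hp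
  have hDne := Dem_nonempty hQc hQ0 hp hu x
  have hDcpt := Dem_compact hQc hu x
  obtain ⟨qs, hqs, hqsmin⟩ := hDcpt.exists_isMinOn hDne hc_cont.continuousOn
  have hmval : sInf (c '' Dem Q p x) = c qs :=
    IsLeast.csInf_eq ⟨⟨qs, hqs, rfl⟩, by
      rintro _ ⟨z, hz, rfl⟩
      exact hqsmin hz⟩
  have hupper : ∀ k : ℕ,
      ((k:ℝ)+1) * (indirect Q p x - indirect Q (pert Q p c k) x) ≤ c qs := by
    intro k
    have h1 := pert_ge hQc hQ0 hconv hp hq hq0 hc_cont hc0 hcnn k x qs hqs.1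
    have h2 : dot x qs - envelope (box (0:ℝ) 1) Q p qs = indirect Q p x :=
      Dem_eq_u hu hx hqs
    have h3 : indirect Q p x - indirect Q (pert Q p c k) x ≤ ((k:ℝ)+1)⁻¹ * c qs := by
      linarith
    calc ((k:ℝ)+1) * (indirect Q p x - indirect Q (pert Q p c k) x)
        ≤ ((k:ℝ)+1) * (((k:ℝ)+1)⁻¹ * c qs) := mul_le_mul_of_nonneg_left h3 (by positivity)
      _ = c qs := by rw [← mul_assoc, tk_mul, one_mul]
  have hnn : ∀ k : ℕ, 0 ≤ ((k:ℝ)+1) * (indirect Q p x - indirect Q (pert Q p c k) x) := by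
    intro k
    have := pert_le_u hQc hQ0 hp hp0 hcnn k hx
    exact mul_nonneg (by positivity) (by linarith)
  have hlower : ∀ δ : ℝ, 0 < δ → ∀ᶠ k : ℕ in Filter.atTop,
      c qs - δ ≤ ((k:ℝ)+1) * (indirect Q p x - indirect Q (pert Q p c k) x) := by
    intro δ hδ
    by_cases hmd : c qs - δ < 0
    · exact Filter.Eventually.of_forall fun k => le_trans (le_of_lt hmd) (hnn k)
    · push_neg at hmd
      set K' := {q' ∈ Q | c q' ≤ c qs - δ} with hK'_def
      have h0K : (0 : Fin N → ℝ) ∈ K' := ⟨hQ0, by rw [hc0]; exact hmd⟩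
      have hK'cpt : IsCompact K' := hQc.inter_right (isClosed_le hc_cont continuous_const)
      obtain ⟨qb, hqbK, hqbmax⟩ := hK'cpt.exists_isMaxOn ⟨0, h0K⟩
        (((continuous_dot_right x).sub (envelope_continuous hu)).continuousOn)
      have hqbQ : qb ∈ Q := hqbK.1
      have hqbnotD : qb ∉ Dem Q p x := by
        intro hmem
        have h1 : c qs ≤ c qb := hqsmin hmem
        have h2 : c qb ≤ c qs - δ := hqbK.2
        linarith
      have hqblt : dot x qb - envelope (box (0:ℝ) 1) Q p qb < indirect Q p x := by
        rcases lt_or_eq_of_le (ell_le_u hu hx qb) with h | h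
        · exact h
        · exact absurd ⟨hqbQ, le_of_eq h.symm⟩ hqbnotD
      have hη : 0 < indirect Q p x - (dot x qb - envelope (box (0:ℝ) 1) Q p qb) := by
        linarith
      filter_upwards [tk_eventually_lt hη] with k hk
      have hcqs1 : c qs - δ ≤ 1 := by linarith [hc1 qs]
      have htk := tk_pos k
      have htle : ((k:ℝ)+1)⁻¹ * (c qs - δ) ≤ ((k:ℝ)+1)⁻¹ :=
        le_trans (mul_le_mul_of_nonneg_left hcqs1 (le_of_lt htk)) (le_of_eq (mul_one _))
      have hvle : indirect Q (pert Q p c k) x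
          ≤ indirect Q p x - ((k:ℝ)+1)⁻¹ * (c qs - δ) := by
        refine indirect_le hQ0 fun q' hq' => ?_
        by_cases hz : q' = 0
        · subst hz
          rw [pert, if_pos rfl, dot_zero_right, sub_zero]
          have h0ℓ : dot x 0 - envelope (box (0:ℝ) 1) Q p 0
              ≤ dot x qb - envelope (box (0:ℝ) 1) Q p qb := hqbmax h0K
          have hpb0 := envelope_zero_nonpos hQc hQ0 hp hp0
          rw [dot_zero_right] at h0ℓ
          linarith
        · rw [pert, if_neg hz]
          by_cases hK : q' ∈ K'
          · have hℓle : dot x q' - envelope (box (0:ℝ) 1) Q p q'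
                ≤ dot x qb - envelope (box (0:ℝ) 1) Q p qb := hqbmax hK
            have h2 : 0 ≤ ((k:ℝ)+1)⁻¹ * c q' :=
              mul_nonneg (le_of_lt htk) (hcnn q')
            linarith
          · have hcgt : c qs - δ < c q' := by
              by_contra hcon
              push_neg at hcon
              exact hK ⟨hq', hcon⟩
            have hℓu := ell_le_u hu hx q'
            have h2 : ((k:ℝ)+1)⁻¹ * (c qs - δ) ≤ ((k:ℝ)+1)⁻¹ * c q' :=
              mul_le_mul_of_nonneg_left (le_of_lt hcgt) (le_of_lt htk)
            linarith
      have h3 : ((k:ℝ)+1)⁻¹ * (c qs - δ) ≤ indirect Q p x - indirect Q (pert Q p c k) x := by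
        linarith
      calc c qs - δ = ((k:ℝ)+1) * (((k:ℝ)+1)⁻¹ * (c qs - δ)) := by
            rw [← mul_assoc, tk_mul, one_mul]
        _ ≤ ((k:ℝ)+1) * (indirect Q p x - indirect Q (pert Q p c k) x) :=
            mul_le_mul_of_nonneg_left h3 (by positivity)
  rw [hmval, Metric.tendsto_atTop]
  intro ε hε
  obtain ⟨K, hK⟩ := Filter.eventually_atTop.1 (hlower (ε/2) (by linarith))
  refine ⟨K, fun k hk => ?_⟩
  have h1 := hK k hk
  have h2 := hupper k
  rw [Real.dist_eq, abs_lt]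
  constructor <;> linarith

end StepB

/-! ### Bump functions and Step B assembly -/

section StepB2

/-- Bump function at `q`, vanishing at `0`. -/
def bump (q : Fin N → ℝ) (j : ℕ) (z : Fin N → ℝ) : ℝ :=
  max 0 (1 - ((j:ℝ)+1) * ‖z - q‖ / ‖q‖)

lemma bump_cont (q : Fin N → ℝ) (j : ℕ) : Continuous (bump q j) :=
  continuous_const.max (continuous_const.sub ((continuous_const.mul
    ((continuous_id.sub continuous_const).norm)).div_const _))

lemma bump_nonneg (q : Fin N → ℝ) (j : ℕ) (z : Fin N → ℝ) : 0 ≤ bump q j z := le_max_left _ _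

lemma bump_le_one (q : Fin N → ℝ) (j : ℕ) (z : Fin N → ℝ) : bump q j z ≤ 1 := by
  apply max_le zero_le_one
  have h1 : 0 ≤ ((j:ℝ)+1) * ‖z - q‖ / ‖q‖ := by positivity
  linarith

lemma bump_zero {q : Fin N → ℝ} (hq : q ≠ 0) (j : ℕ) : bump q j 0 = 0 := by
  have hqn : (0:ℝ) < ‖q‖ := norm_pos_iff.2 hq
  have h1 : ((j:ℝ)+1) * ‖(0:Fin N → ℝ) - q‖ / ‖q‖ = (j:ℝ)+1 := by
    rw [zero_sub, norm_neg]
    field_simp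
  unfold bump
  rw [h1]
  apply max_eq_left
  have : (0:ℝ) ≤ (j:ℝ) := Nat.cast_nonneg j
  linarith

lemma bump_self (q : Fin N → ℝ) (j : ℕ) : bump q j q = 1 := by
  unfold bump
  simp

lemma bump_tendsto {q : Fin N → ℝ} (hq : q ≠ 0) {z : Fin N → ℝ} (hz : z ≠ q) :
    Filter.Tendsto (fun j : ℕ => bump q j z) Filter.atTop (nhds 0) := by
  have hzq : (0:ℝ) < ‖z - q‖ := by rw [norm_pos_iff]; exact sub_ne_zero.2 hz
  have hqn : (0:ℝ) < ‖q‖ := norm_pos_iff.2 hq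
  obtain ⟨K, hK⟩ := exists_nat_ge (‖q‖ / ‖z - q‖)
  have hev : ∀ᶠ j : ℕ in Filter.atTop, bump q j z = 0 := by
    filter_upwards [Filter.eventually_ge_atTop K] with j hj
    have h1 : ‖q‖ / ‖z - q‖ ≤ (j:ℝ) + 1 := by
      have : (K:ℝ) ≤ (j:ℝ) := Nat.cast_le.2 hj
      linarith
    have h2 : ‖q‖ ≤ ((j:ℝ)+1) * ‖z - q‖ := by
      rw [div_le_iff₀ hzq] at h1
      linarith
    have h3 : 1 ≤ ((j:ℝ)+1) * ‖z - q‖ / ‖q‖ := by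
      rw [le_div_iff₀ hqn]
      linarith
    unfold bump
    apply max_eq_left
    linarith
  exact Filter.Tendsto.congr' (hev.mono fun j h => h.symm) tendsto_const_nhds

lemma stepB {f : (Fin N → ℝ) → ℝ} (hf : DensityHyp 0 1 f) {Q : Set (Fin N → ℝ)}
    (hQ : QHyp Q) {p : (Fin N → ℝ) → ℝ} (hopt : Optimal 0 1 f Q p)
    {q : Fin N → ℝ} (hq : q ∈ Q) (hq0 : q ≠ 0) :
    0 ≤ mu 0 1 f (demandSet (box (0:ℝ) 1) Q p q) := by
  obtain ⟨hconv, hQc, hpos, hQint, hQ0⟩ := hQ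
  obtain ⟨⟨hp, hp0⟩, hmax⟩ := hopt
  have hu : Continuous (indirect Q p) := indirect_continuous hQc hQ0 hp
  have hcc : ∀ j : ℕ, Continuous (bump q j) := bump_cont q
  have hc0 : ∀ j : ℕ, bump q j 0 = 0 := bump_zero hq0
  have hcn : ∀ j : ℕ, ∀ z, 0 ≤ bump q j z := bump_nonneg q
  have hc1 : ∀ j : ℕ, ∀ z, bump q j z ≤ 1 := bump_le_one q
  have hvcont : ∀ j k : ℕ, Continuous (indirect Q (pert Q p (bump q j) k)) := fun j k =>
    indirect_continuous hQc hQ0 (pert_bdd hQc hQ0 hp (hcn j) k)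
  have hHb : ∀ j : ℕ, ∀ k : ℕ, ∀ y ∈ box (0:ℝ) 1,
      |((k:ℝ)+1) * (indirect Q p y - indirect Q (pert Q p (bump q j) k) y)| ≤ 1 := by
    intro j k y hy
    have h1 := pert_le_u hQc hQ0 hp hp0 (hcn j) k hy
    have h2 := u_le_pert hQc hQ0 hconv hp hq hq0 (hcc j) (hc0 j) (hcn j) (hc1 j) k hy
    rw [abs_of_nonneg (mul_nonneg (by positivity) (by linarith))]
    calc ((k:ℝ)+1) * (indirect Q p y - indirect Q (pert Q p (bump q j) k) y)
        ≤ ((k:ℝ)+1) * ((k:ℝ)+1)⁻¹ :=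
          mul_le_mul_of_nonneg_left (by linarith) (by positivity)
      _ = 1 := tk_mul k
  have hJH : ∀ j k : ℕ,
      0 ≤ Jint f (fun y => ((k:ℝ)+1) *
        (indirect Q p y - indirect Q (pert Q p (bump q j) k) y)) := by
    intro j k
    rw [Jint_smul, ← TR_sub_eq hf Q _ _ hu (hvcont j k)]
    have := hmax _ (pert_feasible hQc hQ0 hp (hcn j) k)
    exact mul_nonneg (by positivity) (by linarith)
  have hdans : ∀ j : ℕ, ∀ x ∈ box (0:ℝ) 1,
      Filter.Tendsto (fun k : ℕ => ((k:ℝ)+1) *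
          (indirect Q p x - indirect Q (pert Q p (bump q j) k) x))
        Filter.atTop (nhds (sInf (bump q j '' Dem Q p x))) := fun j x hx =>
    danskin hQc hQ0 hconv hp hp0 hq hq0 (hcc j) (hc0 j) (hcn j) (hc1 j) hx
  have hHm : ∀ j k : ℕ, AEStronglyMeasurable
      (fun y => ((k:ℝ)+1) * (indirect Q p y - indirect Q (pert Q p (bump q j) k) y))
      (volume.restrict (box (0:ℝ) 1 : Set (Fin N → ℝ))) := fun j k =>
    (continuous_const.mul (hu.sub (hvcont j k))).aestronglyMeasurable
  have hHmf : ∀ j k : ℕ, ∀ n : Fin N, AEStronglyMeasurable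
      (fun y => ((k:ℝ)+1) * (indirect Q p (Function.update y n 1)
        - indirect Q (pert Q p (bump q j) k) (Function.update y n 1)))
      (volume.restrict (box (0:ℝ) 1 : Set (Fin N → ℝ))) := fun j k n =>
    ((continuous_const.mul (hu.sub (hvcont j k))).comp
      (continuous_update_one n)).aestronglyMeasurable
  have hgm : ∀ j : ℕ, AEStronglyMeasurable (fun x => sInf (bump q j '' Dem Q p x))
      (volume.restrict (box (0:ℝ) 1 : Set (Fin N → ℝ))) := by
    intro j
    apply aestronglyMeasurable_of_tendsto_ae Filter.atTop (hHm j)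
    filter_upwards [self_mem_ae_restrict measurableSet_box] with x hx
    exact hdans j x hx
  have hgmf : ∀ j : ℕ, ∀ n : Fin N, AEStronglyMeasurable
      (fun y => sInf (bump q j '' Dem Q p (Function.update y n 1)))
      (volume.restrict (box (0:ℝ) 1 : Set (Fin N → ℝ))) := by
    intro j n
    apply aestronglyMeasurable_of_tendsto_ae Filter.atTop (fun k => hHmf j k n)
    filter_upwards [self_mem_ae_restrict measurableSet_box] with y hy
    exact hdans j _ (update_mem_box hy n)
  have hgb : ∀ j : ℕ, ∀ x ∈ box (0:ℝ) 1, |sInf (bump q j '' Dem Q p x)| ≤ 1 := by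
    intro j x _
    have hDne := Dem_nonempty hQc hQ0 hp hu x
    have hne : (bump q j '' Dem Q p x).Nonempty := hDne.image _
    have hbb : BddBelow (bump q j '' Dem Q p x) :=
      ⟨0, by rintro _ ⟨w, _, rfl⟩; exact hcn j w⟩
    have h0 : 0 ≤ sInf (bump q j '' Dem Q p x) :=
      le_csInf hne (by rintro _ ⟨z, _, rfl⟩; exact hcn j z)
    obtain ⟨z, hz⟩ := hDne
    have h1 : sInf (bump q j '' Dem Q p x) ≤ 1 :=
      le_trans (csInf_le hbb ⟨z, hz, rfl⟩) (hc1 j z)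
    rw [abs_of_nonneg h0]
    exact h1
  have hJg : ∀ j : ℕ, 0 ≤ Jint f (fun x => sInf (bump q j '' Dem Q p x)) := by
    intro j
    have htt := Jint_tendsto hf
      (G := fun k y => ((k:ℝ)+1) * (indirect Q p y - indirect Q (pert Q p (bump q j) k) y))
      (g := fun x => sInf (bump q j '' Dem Q p x))
      (hHm j) (fun k n => hHmf j k n) (hHb j) (hdans j)
    exact ge_of_tendsto' htt (hJH j)
  set Ex := {x : Fin N → ℝ | x ∈ box (0:ℝ) 1 ∧ Dem Q p x ⊆ {q}} with hEx_def
  have hglim : ∀ x ∈ box (0:ℝ) 1,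
      Filter.Tendsto (fun j : ℕ => sInf (bump q j '' Dem Q p x)) Filter.atTop
        (nhds (Ex.indicator (fun _ => (1:ℝ)) x)) := by
    intro x hx
    by_cases hsub : Dem Q p x ⊆ {q}
    · have hqD : q ∈ Dem Q p x := by
        obtain ⟨z, hz⟩ := Dem_nonempty hQc hQ0 hp hu x
        have hzz := hsub hz
        rw [Set.mem_singleton_iff] at hzz
        rwa [hzz] at hz
      have hconst : ∀ j : ℕ, sInf (bump q j '' Dem Q p x) = 1 := by
        intro j
        have himg : bump q j '' Dem Q p x = {1} := by
          apply Subset.antisymm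
          · rintro _ ⟨z, hz, rfl⟩
            have hzz := hsub hz
            rw [Set.mem_singleton_iff] at hzz
            simp [hzz, bump_self]
          · intro w hw
            rw [Set.mem_singleton_iff] at hw
            exact ⟨q, hqD, by rw [hw]; exact bump_self q j⟩
        rw [himg, csInf_singleton]
      have hmem : x ∈ Ex := ⟨hx, hsub⟩
      rw [Set.indicator_of_mem hmem]
      exact Filter.Tendsto.congr (fun j : ℕ => (hconst j).symm) tendsto_const_nhds
    · obtain ⟨z, hz, hzq⟩ : ∃ z ∈ Dem Q p x, z ≠ q := by
        by_contra hcon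
        push_neg at hcon
        exact hsub fun z hz => Set.mem_singleton_iff.2 (hcon z hz)
      have hnotmem : x ∉ Ex := fun hmem => hzq (Set.mem_singleton_iff.1 (hmem.2 hz))
      rw [Set.indicator_of_notMem hnotmem]
      have hDne := Dem_nonempty hQc hQ0 hp hu x
      refine squeeze_zero (fun j => ?_) (fun j => ?_) (bump_tendsto hq0 hzq)
      · exact le_csInf (hDne.image _) (by rintro _ ⟨w, _, rfl⟩; exact hcn j w)
      · exact csInf_le ⟨0, by rintro _ ⟨w, _, rfl⟩; exact hcn j w⟩ ⟨z, hz, rfl⟩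
  have hJEx : 0 ≤ Jint f (Ex.indicator fun _ => (1:ℝ)) := by
    have htt := Jint_tendsto hf (G := fun j x => sInf (bump q j '' Dem Q p x))
      (g := Ex.indicator fun _ => (1:ℝ)) hgm hgmf hgb hglim
    exact ge_of_tendsto' htt hJg
  set D := demandSet (box (0:ℝ) 1) Q p q with hD_def
  have hExD : Ex ⊆ D := by
    rintro x ⟨hx, hsub⟩
    have hqD : q ∈ Dem Q p x := by
      obtain ⟨z, hz⟩ := Dem_nonempty hQc hQ0 hp hu x
      have hzz := hsub hz
      rw [Set.mem_singleton_iff] at hzz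
      rwa [hzz] at hz
    exact (mem_demandSet_iff hQc hQ0 hp hu hq x).2 ⟨hx, hqD⟩
  have hmeasD : MeasurableSet D := (demandSet_closed hu q).measurableSet
  have hface : ∀ n : Fin N,
      (∫ y in box (0:ℝ) 1, Ex.indicator (fun _ => (1:ℝ)) (Function.update y n 1)
        * f (Function.update y n 1))
      ≤ ∫ y in box (0:ℝ) 1, D.indicator (fun _ => (1:ℝ)) (Function.update y n 1)
        * f (Function.update y n 1) := by
    intro n
    classical
    apply integral_mono_of_nonneg
    · exact Filter.Eventually.of_forall fun y =>
        mul_nonneg (Set.indicator_nonneg (fun _ _ => zero_le_one) _) (hf.1 _)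
    · have hm : Measurable fun y : Fin N → ℝ =>
          D.indicator (fun _ => (1:ℝ)) (Function.update y n 1) := by
        classical
        have heq : (fun y : Fin N → ℝ => D.indicator (fun _ => (1:ℝ)) (Function.update y n 1))
            = fun y => if Function.update y n 1 ∈ D then (1:ℝ) else 0 := by
          funext y; rw [Set.indicator_apply]
        rw [heq]
        exact Measurable.ite ((continuous_update_one n).measurable hmeasD)
          measurable_const measurable_const
      refine Integrable.mono' (f_upd_integrable hf n)
        (hm.aestronglyMeasurable.mul
          ((f_upd_contOn hf n).aestronglyMeasurable measurableSet_box)) ?_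
      filter_upwards [self_mem_ae_restrict measurableSet_box] with y _
      rw [Real.norm_eq_abs, abs_mul]
      have h1 : |D.indicator (fun _ => (1:ℝ)) (Function.update y n 1)| ≤ 1 := by
        rw [Set.indicator_apply]; split <;> simp
      have h2 : |f (Function.update y n 1)| = f (Function.update y n 1) :=
        abs_of_nonneg (hf.1 _)
      rw [h2]
      calc |D.indicator (fun _ => (1:ℝ)) (Function.update y n 1)| * f (Function.update y n 1)
          ≤ 1 * f (Function.update y n 1) := mul_le_mul_of_nonneg_right h1 (hf.1 _)
        _ = f (Function.update y n 1) := one_mul _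
    · exact Filter.Eventually.of_forall fun y =>
        mul_le_mul_of_nonneg_right
          (Set.indicator_le_indicator_of_subset hExD (fun _ => zero_le_one) _) (hf.1 _)
  have hphi_eq : (∫ y in box (0:ℝ) 1, Ex.indicator (fun _ => (1:ℝ)) y * phi f y)
      = ∫ y in box (0:ℝ) 1, D.indicator (fun _ => (1:ℝ)) y * phi f y := by
    apply integral_congr_ae
    filter_upwards [ae_dem_subsingleton hQc hQ0 hp, self_mem_ae_restrict measurableSet_box]
      with x hsing hx
    have hind : Ex.indicator (fun _ => (1:ℝ)) x = D.indicator (fun _ => (1:ℝ)) x := by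
      by_cases h : x ∈ D
      · have hqD : q ∈ Dem Q p x := ((mem_demandSet_iff hQc hQ0 hp hu hq x).1 h).2
        have hmem : x ∈ Ex := ⟨hx, fun z hz => Set.mem_singleton_iff.2 (hsing z hz q hqD)⟩
        rw [Set.indicator_of_mem hmem, Set.indicator_of_mem h]
      · have hnot : x ∉ Ex := fun hc => h (hExD hc)
        rw [Set.indicator_of_notMem hnot, Set.indicator_of_notMem h]
    rw [hind]
  have hJle : Jint f (Ex.indicator fun _ => (1:ℝ)) ≤ Jint f (D.indicator fun _ => (1:ℝ)) := by
    unfold Jint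
    rw [hphi_eq]
    apply sub_le_sub_right
    exact Finset.sum_le_sum fun n _ => hface n
  rw [mu_eq_Jint hf hmeasD]
  exact le_trans hJEx hJle

end StepB2



/-- when `X = [0,1]^N` (negligible bottom boundary), for any optimal
feasible price schedule and any nonzero bundle `q ∈ 𝒬`, `μ(D(q)) = 0`. -/
theorem mu_demand_eq_zero
    {N : ℕ} (hN : 0 < N)
    (f : (Fin N → ℝ) → ℝ) (hf : DensityHyp 0 1 f)
    (Q : Set (Fin N → ℝ)) (hQ : QHyp Q)
    (p : (Fin N → ℝ) → ℝ) (hopt : Optimal 0 1 f Q p)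
    (q : Fin N → ℝ) (hq : q ∈ Q) (hq0 : q ≠ 0) :
    mu 0 1 f (demandSet (box 0 1) Q p q) = 0 :=
  le_antisymm (stepA hf hQ hopt hq hq0) (stepB hf hQ hopt hq hq0)

end Stmt9
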